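/- Let c_1 = c_{1, π/2}. Then for every real s > 1 the integral ∫_0^∞ e^{−st} c_1(t) dt converges absolutely and equals arctan(√(s²−1)) / √(s²−1). -/

import Mathlib

open scoped Nat

/-- The function `c_{d,α}` of the paper: the candidate (rescaled radial profile of the)
Weyl symbol of the inverse of the harmonic oscillator, depending on a parameter `α`. -/
noncomputable def cda (d : ℕ) (α : ℝ) (t : ℝ) : ℝ :=
  ((d‼ : ℝ) / d) *
    (α * (∑' p : ℕ, t ^ (2*p) / (((2*p)‼ * (2*p + d - 1)‼ : ℕ) : ℝ)) -
      ∑' p : ℕ, t ^ (2*p+1) / (((2*p+1)‼ * (2*p + d)‼ : ℕ) : ℝ))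

open MeasureTheory

open Real Set intervalIntegral

namespace Stmt9Aux

lemma df_succ_le : ∀ n : ℕ, n‼ ≤ (n+1)‼
  | 0 => le_refl _
  | 1 => by norm_num
  | (n+2) => by
      rw [Nat.doubleFactorial_add_two, show n+2+1 = n+1+2 by ring,
        Nat.doubleFactorial_add_two]
      exact Nat.mul_le_mul (by omega) (df_succ_le n)

lemma factorial_le_df_sq (n : ℕ) : n ! ≤ n‼ * n‼ := by
  cases n with
  | zero => simp
  | succ m =>
      rw [Nat.factorial_eq_mul_doubleFactorial]
      exact Nat.mul_le_mul_left _ (df_succ_le m)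

lemma prod_even (p : ℕ) :
    ∏ i ∈ Finset.range p, (2*(i:ℝ)+1)/(2*i+2) = (2*p)! / ((2*p)‼ : ℝ)^2 := by
  induction p with
  | zero => simp
  | succ k ih =>
      rw [Finset.prod_range_succ, ih]
      have h1 : (2*(k+1)) = (2*k) + 2 := by ring
      rw [h1, Nat.doubleFactorial_add_two]
      have h2 : ((2*k)+2)! = ((2*k)+2) * (((2*k)+1) * (2*k)!) := by
        rw [Nat.factorial_succ, Nat.factorial_succ]
      rw [h2]
      have hd : ((2*k)‼ : ℝ) ≠ 0 := by positivity
      push_cast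
      field_simp

lemma prod_odd (p : ℕ) :
    ∏ i ∈ Finset.range p, (2*(i:ℝ)+2)/(2*i+3) = (2*p+1)! / ((2*p+1)‼ : ℝ)^2 := by
  induction p with
  | zero => simp
  | succ k ih =>
      rw [Finset.prod_range_succ, ih]
      have h1 : (2*(k+1)+1) = (2*k+1) + 2 := by ring
      rw [h1, Nat.doubleFactorial_add_two]
      have h2 : ((2*k+1)+2)! = ((2*k+1)+2) * (((2*k+1)+1) * (2*k+1)!) := by
        rw [Nat.factorial_succ, Nat.factorial_succ]
      rw [h2]
      have hd : ((2*k+1)‼ : ℝ) ≠ 0 := by positivity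
      push_cast
      field_simp
      ring

lemma half (n : ℕ) :
    ∫ x in (0:ℝ)..(π/2), sin x ^ n = (∫ x in (0:ℝ)..π, sin x ^ n) / 2 := by
  have hii : ∀ a b : ℝ, IntervalIntegrable (fun x => sin x ^ n) volume a b :=
    fun a b => (continuous_sin.pow n).intervalIntegrable a b
  have h1 : (∫ x in (0:ℝ)..(π/2), sin (π - x) ^ n) = ∫ x in (π - π/2)..(π - 0), sin x ^ n :=
    integral_comp_sub_left (fun x => sin x ^ n) π
  simp only [Real.sin_pi_sub, sub_zero] at h1
  have h15 : π - π/2 = π/2 := by ring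
  rw [h15] at h1
  have h2 : (∫ x in (0:ℝ)..(π/2), sin x ^ n) + ∫ x in (π/2)..π, sin x ^ n
      = ∫ x in (0:ℝ)..π, sin x ^ n :=
    integral_add_adjacent_intervals (hii _ _) (hii _ _)
  rw [← h2, ← h1]
  ring

lemma int_even (p : ℕ) :
    ∫ x in (0:ℝ)..(π/2), sin x ^ (2*p) = π/2 * ((2*p)! / ((2*p)‼ : ℝ)^2) := by
  rw [half, integral_sin_pow_even, prod_even]
  ring

lemma int_odd (p : ℕ) :
    ∫ x in (0:ℝ)..(π/2), sin x ^ (2*p+1) = (2*p+1)! / ((2*p+1)‼ : ℝ)^2 := by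
  rw [half, integral_sin_pow_odd, prod_odd]
  ring


lemma summable_aux (t : ℝ) (c : ℕ) : Summable (fun p : ℕ => |t| ^ (2*p+c) / (2*p+c)!) := by
  have h := Real.summable_pow_div_factorial |t|
  have : Summable ((fun n : ℕ => |t| ^ n / n !) ∘ (fun p : ℕ => 2*p+c)) :=
    h.comp_injective (fun a b hab => by omega)
  exact this

lemma le_df (t : ℝ) (n : ℕ) : |t ^ n / ((n‼ : ℝ))^2| ≤ |t| ^ n / n ! := by
  rw [abs_div, abs_pow, abs_of_nonneg (by positivity : (0:ℝ) ≤ ((n‼:ℝ))^2)]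
  apply div_le_div_of_nonneg_left (by positivity) (by positivity)
  rw [sq]
  exact_mod_cast factorial_le_df_sq n

lemma summable_even (t : ℝ) : Summable (fun p : ℕ => t ^ (2*p) / (((2*p)‼ : ℝ))^2) := by
  apply Summable.of_abs
  apply Summable.of_nonneg_of_le (fun p => abs_nonneg _) (fun p => le_df t (2*p))
  simpa using summable_aux t 0

lemma summable_odd (t : ℝ) : Summable (fun p : ℕ => t ^ (2*p+1) / (((2*p+1)‼ : ℝ))^2) := by
  apply Summable.of_abs
  exact Summable.of_nonneg_of_le (fun p => abs_nonneg _) (fun p => le_df t (2*p+1))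
    (summable_aux t 1)


lemma cda_one_eq (t : ℝ) :
    cda 1 (π/2) t = π/2 * (∑' p : ℕ, t ^ (2*p) / (((2*p)‼ : ℝ))^2)
      - ∑' p : ℕ, t ^ (2*p+1) / (((2*p+1)‼ : ℝ))^2 := by
  unfold cda
  norm_num
  congr 2
  · exact tsum_congr fun p => by rw [sq]
  · funext p
    rw [sq]

lemma exp_tsum (x : ℝ) : Real.exp x = ∑' n : ℕ, x ^ n / n ! := by
  rw [Real.exp_eq_exp_ℝ, NormedSpace.exp_eq_tsum_div]

set_option maxHeartbeats 1000000 in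
lemma cda_rep (t : ℝ) :
    cda 1 (π/2) t = ∫ θ in (0:ℝ)..(π/2), Real.exp (-(t * Real.sin θ)) := by
  have hle : (0:ℝ) ≤ π/2 := by positivity
  set ν : Measure ℝ := volume.restrict (Ioc (0:ℝ) (π/2)) with hν
  have hνuniv : ν univ = ENNReal.ofReal (π/2) := by
    rw [hν, Measure.restrict_apply MeasurableSet.univ, univ_inter, Real.volume_Ioc, sub_zero]
  -- step 1 : interval integral to set integral
  rw [intervalIntegral.integral_of_le hle]
  -- step 2 : expand exp
  have hexp : ∀ θ : ℝ, Real.exp (-(t * Real.sin θ)) = ∑' n : ℕ, (-(t * Real.sin θ)) ^ n / n ! :=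
    fun θ => exp_tsum _
  simp only [hexp]
  -- step 3 : interchange
  set F : ℕ → ℝ → ℝ := fun n θ => (-(t * Real.sin θ)) ^ n / n ! with hF
  have hFcont : ∀ n, Continuous (F n) := by
    intro n
    exact ((continuous_const.mul continuous_sin).neg.pow n).div_const _
  have hFint : ∀ n, Integrable (F n) ν := fun n => (hFcont n).integrableOn_Ioc
  have hFbound : ∀ n θ, ‖F n θ‖ ≤ |t| ^ n / n ! := by
    intro n θ
    rw [hF]
    simp only [norm_div, norm_pow, norm_neg, Real.norm_eq_abs, abs_mul]
    rw [abs_of_nonneg (by positivity : (0:ℝ) ≤ (n ! : ℝ))]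
    apply div_le_div_of_nonneg_right _ (by positivity)
    · apply pow_le_pow_left₀ (by positivity)
      calc |t| * |Real.sin θ| ≤ |t| * 1 :=
          mul_le_mul_of_nonneg_left (abs_sin_le_one θ) (abs_nonneg t)
        _ = |t| := mul_one _
  have hFsum : Summable fun n => ∫ θ, ‖F n θ‖ ∂ν := by
    apply Summable.of_nonneg_of_le (fun n => integral_nonneg (fun θ => norm_nonneg _))
      (fun n => ?_) (((Real.summable_pow_div_factorial |t|).mul_left (π/2)))
    calc (∫ θ, ‖F n θ‖ ∂ν) ≤ ∫ _, |t| ^ n / n ! ∂ν := by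
          apply integral_mono (hFint n).norm (integrable_const _)
          exact fun θ => hFbound n θ
      _ = (ν univ).toReal • (|t| ^ n / n !) := by rw [MeasureTheory.integral_const]; rfl
      _ = π/2 * (|t| ^ n / n !) := by
          rw [hνuniv, ENNReal.toReal_ofReal (by positivity)]
          rfl
  rw [← MeasureTheory.integral_tsum_of_summable_integral_norm hFint hFsum]
  -- step 4 : compute each integral
  have hterm : ∀ n : ℕ, (∫ θ, F n θ ∂ν) = (-t) ^ n / n ! * ∫ x in (0:ℝ)..(π/2), sin x ^ n := by
    intro n
    rw [intervalIntegral.integral_of_le hle]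
    rw [← MeasureTheory.integral_const_mul]
    apply MeasureTheory.integral_congr_ae
    filter_upwards with θ
    rw [hF]
    simp only
    rw [← neg_mul, mul_pow]
    ring
  -- step 5 : split even and odd
  have heven : ∀ p : ℕ, (∫ θ, F (2*p) θ ∂ν) = π/2 * (t ^ (2*p) / ((2*p)‼ : ℝ)^2) := by
    intro p
    rw [hterm, int_even, Even.neg_pow ⟨p, by ring⟩]
    have h1 : ((2*p)! : ℝ) ≠ 0 := by positivity
    have h2 : ((2*p)‼ : ℝ) ≠ 0 := by positivity
    field_simp
  have hodd : ∀ p : ℕ, (∫ θ, F (2*p+1) θ ∂ν) = -(t ^ (2*p+1) / ((2*p+1)‼ : ℝ)^2) := by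
    intro p
    rw [hterm, int_odd, Odd.neg_pow ⟨p, by ring⟩]
    have h1 : ((2*p+1)! : ℝ) ≠ 0 := by positivity
    have h2 : ((2*p+1)‼ : ℝ) ≠ 0 := by positivity
    field_simp
  have hse : Summable fun p : ℕ => ∫ θ, F (2*p) θ ∂ν := by
    simp only [heven]
    exact (summable_even t).mul_left _
  have hso : Summable fun p : ℕ => ∫ θ, F (2*p+1) θ ∂ν := by
    simp only [hodd]
    exact (summable_odd t).neg
  rw [← tsum_even_add_odd hse hso]
  simp only [heven, hodd]
  rw [tsum_mul_left, tsum_neg, cda_one_eq]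
  ring


lemma hasDerivAt_H {s u : ℝ} (hs : 1 < s) (hu2 : u^2 = s^2 - 1) (hupos : 0 < u)
    {θ : ℝ} (h0 : 0 ≤ θ) (h1 : θ ≤ π/2) :
    HasDerivAt (fun x : ℝ => (2/u) * Real.arctan ((s * Real.tan (x/2) + 1)/u))
      ((s + sin θ)⁻¹) θ := by
  have hs0 : (0:ℝ) < s := by linarith
  have hune : u ≠ 0 := ne_of_gt hupos
  have hcos : 0 < Real.cos (θ/2) :=
    Real.cos_pos_of_mem_Ioo ⟨by linarith [pi_pos], by linarith [pi_pos]⟩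
  have hcosne : Real.cos (θ/2) ≠ 0 := ne_of_gt hcos
  have h2 : HasDerivAt (fun x : ℝ => x/2) (1/2) θ := by
    simpa using (hasDerivAt_id θ).div_const 2
  have htan : HasDerivAt (fun x : ℝ => Real.tan (x/2)) (1 / Real.cos (θ/2)^2 * (1/2)) θ :=
    by have := (Real.hasDerivAt_tan hcosne).comp θ h2; exact this
  have hinner : HasDerivAt (fun x : ℝ => (s * Real.tan (x/2) + 1)/u)
      ((s * (1 / Real.cos (θ/2)^2 * (1/2)))/u) θ :=
    ((htan.const_mul s).add_const 1).div_const u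
  have harct : HasDerivAt (fun x : ℝ => Real.arctan ((s * Real.tan (x/2) + 1)/u))
      (1 / (1 + ((s * Real.tan (θ/2) + 1)/u)^2) * ((s * (1 / Real.cos (θ/2)^2 * (1/2)))/u)) θ :=
    (Real.hasDerivAt_arctan _).comp θ hinner
  have hfull := harct.const_mul (2/u)
  refine hfull.congr_deriv ?_
  symm
  have hsin : Real.sin θ = 2 * Real.sin (θ/2) * Real.cos (θ/2) := by
    rw [← Real.sin_two_mul]
    congr 1
    ring
  have hsplus : 0 < s + Real.sin θ := by
    have : -1 ≤ Real.sin θ := Real.neg_one_le_sin θ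
    linarith
  have hpyth : Real.sin (θ/2)^2 + Real.cos (θ/2)^2 = 1 := Real.sin_sq_add_cos_sq _
  have hkey : Real.cos (θ/2)^2 * u^2 + (s * Real.sin (θ/2) + Real.cos (θ/2))^2
      = s * (s + Real.sin θ) := by
    rw [hsin, hu2]
    linear_combination s^2 * hpyth
  have hg : 1 + ((s * Real.tan (θ/2) + 1)/u)^2
      = (s * (s + Real.sin θ))/(Real.cos (θ/2)^2 * u^2) := by
    rw [Real.tan_eq_sin_div_cos, ← hkey]
    field_simp
  rw [hg]
  field_simp


lemma key_int {s : ℝ} (hs : 1 < s) :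
    ∫ θ in (0:ℝ)..(π/2), (s + sin θ)⁻¹
      = Real.arctan (Real.sqrt (s^2-1)) / Real.sqrt (s^2-1) := by
  have hs0 : (0:ℝ) < s := by linarith
  set u : ℝ := Real.sqrt (s^2-1) with hu
  have hu2 : u^2 = s^2 - 1 := Real.sq_sqrt (by nlinarith)
  have hupos : 0 < u := Real.sqrt_pos.mpr (by nlinarith)
  have hune : u ≠ 0 := ne_of_gt hupos
  have hne : ∀ θ : ℝ, s + Real.sin θ ≠ 0 := by
    intro θ
    have h := Real.neg_one_le_sin θ
    intro hc
    linarith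
  have hcont : Continuous fun θ : ℝ => (s + Real.sin θ)⁻¹ :=
    (continuous_const.add Real.continuous_sin).inv₀ hne
  have hftc := intervalIntegral.integral_eq_sub_of_hasDerivAt
    (f := fun x : ℝ => (2/u) * Real.arctan ((s * Real.tan (x/2) + 1)/u))
    (f' := fun θ : ℝ => (s + Real.sin θ)⁻¹) (a := 0) (b := π/2)
    (fun θ hθ => by
      rw [uIcc_of_le (by positivity)] at hθ
      exact hasDerivAt_H hs hu2 hupos hθ.1 hθ.2)
    (hcont.intervalIntegrable _ _)
  rw [hftc]
  have he1 : π/2/2 = π/4 := by ring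
  rw [he1, Real.tan_pi_div_four]
  norm_num [Real.tan_zero]
  -- arctan identities
  have hsum1 : (1/u) * (u/(s+1)) < 1 := by
    rw [div_mul_div_comm, one_mul]
    rw [div_lt_one (by positivity)]
    nlinarith
  have hA : Real.arctan (1/u) + Real.arctan (u/(s+1)) = Real.arctan ((s+1)/u) := by
    rw [Real.arctan_add hsum1]
    congr 1
    field_simp
    rw [div_eq_iff (by linarith)]
    linear_combination hu2
  have hsum2 : (u/(s+1)) * (u/(s+1)) < 1 := by
    rw [div_mul_div_comm]
    rw [div_lt_one (by positivity)]
    nlinarith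
  have hdenne : 1 - u/(s+1) * (u/(s+1)) ≠ 0 := ne_of_gt (by linarith)
  have harg : (u/(s+1) + u/(s+1))/(1 - u/(s+1) * (u/(s+1))) = u := by
    rw [div_eq_iff hdenne]
    field_simp
    linear_combination hu2
  have hB : Real.arctan (u/(s+1)) + Real.arctan (u/(s+1)) = Real.arctan u := by
    rw [Real.arctan_add hsum2, harg]
  have h1u : 2 * Real.arctan ((s+1)/u) - 2 * Real.arctan u⁻¹ = Real.arctan u := by
    rw [← one_div, ← hA]
    linarith
  rw [show 2/u * Real.arctan ((s+1)/u) - 2/u * Real.arctan u⁻¹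
      = (2 * Real.arctan ((s+1)/u) - 2 * Real.arctan u⁻¹)/u by ring, h1u]


lemma lap {c : ℝ} (hc : 0 < c) : ∫ t in Ioi (0:ℝ), Real.exp (-(c*t)) = c⁻¹ := by
  have h := MeasureTheory.integral_comp_mul_left_Ioi (fun x => Real.exp (-x)) 0 hc
  simp only [mul_zero] at h
  rw [show (fun t : ℝ => Real.exp (-(c*t))) = fun t : ℝ => (fun x => Real.exp (-x)) (c*t)
    from rfl, h, integral_exp_neg_Ioi, neg_zero, Real.exp_zero, smul_eq_mul, mul_one]


end Stmt9Aux

open Stmt9Aux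

noncomputable def fs (s : ℝ) : ℝ → ℝ → ℝ := fun t θ => Real.exp (-(s*t) - t * Real.sin θ)

theorem stmt9 (s : ℝ) (hs : 1 < s) :
    IntegrableOn (fun t : ℝ => Real.exp (-(s * t)) * cda 1 (Real.pi / 2) t) (Set.Ioi 0) ∧
    (∫ t in Set.Ioi (0:ℝ), Real.exp (-(s * t)) * cda 1 (Real.pi / 2) t)
      = Real.arctan (Real.sqrt (s^2 - 1)) / Real.sqrt (s^2 - 1) := by
  have hs0 : (0:ℝ) < s := by linarith
  have hle : (0:ℝ) ≤ π/2 := by positivity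
  -- pointwise identity
  have h_eq : ∀ t : ℝ, Real.exp (-(s * t)) * cda 1 (π/2) t = ∫ θ, fs s t θ ∂(volume.restrict (Ioc (0:ℝ) (π/2))) := by
    intro t
    rw [cda_rep, intervalIntegral.integral_of_le hle, ← MeasureTheory.integral_const_mul]
    apply MeasureTheory.integral_congr_ae
    filter_upwards with θ
    simp only [fs, ← Real.exp_add]
    ring_nf
  -- integrability of the uncurried function
  have hcont : Continuous (Function.uncurry (fs s)) := by
    apply Real.continuous_exp.comp
    fun_prop
  have hprod : (volume.restrict (Ioi (0:ℝ))).prod (volume.restrict (Ioc (0:ℝ) (π/2))) = (volume.prod volume).restrict ((Ioi (0:ℝ)) ×ˢ (Ioc (0:ℝ) (π/2))) :=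
    Measure.prod_restrict _ _
  have hg1 : Integrable (fun t : ℝ => Real.exp (-s * t)) (volume.restrict (Ioi (0:ℝ))) := exp_neg_integrableOn_Ioi 0 hs0
  have hg2 : Integrable (fun _ : ℝ => (1:ℝ)) (volume.restrict (Ioc (0:ℝ) (π/2))) := by
    exact integrable_const_iff.mpr (Or.inr inferInstance)
  have hg_int : Integrable (fun q : ℝ × ℝ => Real.exp (-s * q.1) * 1) ((volume.restrict (Ioi (0:ℝ))).prod (volume.restrict (Ioc (0:ℝ) (π/2)))) :=
    MeasureTheory.Integrable.mul_prod hg1 hg2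
  have hbound : ∀ᵐ q ∂((volume.restrict (Ioi (0:ℝ))).prod (volume.restrict (Ioc (0:ℝ) (π/2)))), ‖Function.uncurry (fs s) q‖ ≤ ‖Real.exp (-s * q.1) * 1‖ := by
    rw [hprod]
    apply ae_restrict_of_forall_mem (measurableSet_Ioi.prod measurableSet_Ioc)
    rintro ⟨t, θ⟩ ⟨ht, hθ⟩
    simp only [Function.uncurry, fs, mul_one, Real.norm_eq_abs, Real.abs_exp]
    apply Real.exp_le_exp.mpr
    have hsin : 0 ≤ Real.sin θ :=
      Real.sin_nonneg_of_nonneg_of_le_pi (le_of_lt hθ.1) (by linarith [hθ.2, pi_pos])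
    have : 0 ≤ t * Real.sin θ := mul_nonneg (le_of_lt ht) hsin
    linarith
  have hint : Integrable (Function.uncurry (fs s)) ((volume.restrict (Ioi (0:ℝ))).prod (volume.restrict (Ioc (0:ℝ) (π/2)))) :=
    Integrable.mono hg_int hcont.aestronglyMeasurable hbound
  constructor
  · have h1 : Integrable (fun t => ∫ θ, fs s t θ ∂(volume.restrict (Ioc (0:ℝ) (π/2)))) (volume.restrict (Ioi (0:ℝ))) := hint.integral_prod_left
    exact h1.congr (Filter.Eventually.of_forall fun t => (h_eq t).symm)
  · calc (∫ t in Ioi (0:ℝ), Real.exp (-(s * t)) * cda 1 (π/2) t)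
        = ∫ t, (∫ θ, fs s t θ ∂(volume.restrict (Ioc (0:ℝ) (π/2)))) ∂(volume.restrict (Ioi (0:ℝ))) := by
          apply MeasureTheory.integral_congr_ae
          filter_upwards with t using h_eq t
      _ = ∫ θ, (∫ t, fs s t θ ∂(volume.restrict (Ioi (0:ℝ)))) ∂(volume.restrict (Ioc (0:ℝ) (π/2))) := MeasureTheory.integral_integral_swap hint
      _ = ∫ θ, (s + Real.sin θ)⁻¹ ∂(volume.restrict (Ioc (0:ℝ) (π/2))) := by
          apply MeasureTheory.integral_congr_ae
          apply ae_restrict_of_forall_mem measurableSet_Ioc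
          intro θ hθ
          have hsin : 0 ≤ Real.sin θ :=
            Real.sin_nonneg_of_nonneg_of_le_pi (le_of_lt hθ.1) (by linarith [hθ.2, pi_pos])
          have hc : 0 < s + Real.sin θ := by linarith
          have hlap : (∫ t, fs s t θ ∂(volume.restrict (Ioi (0:ℝ)))) = (s + Real.sin θ)⁻¹ := by
            rw [show (fun t => fs s t θ) = fun t => Real.exp (-((s + Real.sin θ) * t)) from ?_,
              lap hc]
            funext t
            rw [fs]
            congr 1
            ring
          exact hlap
      _ = ∫ θ in (0:ℝ)..(π/2), (s + Real.sin θ)⁻¹ := (intervalIntegral.integral_of_le hle).symm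
      _ = Real.arctan (Real.sqrt (s^2 - 1)) / Real.sqrt (s^2 - 1) := key_int hs
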